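/- Let J ≥ 1 and let G be a probability measure on ℝ^J with ∫ max_{j=1,…,J} |v_j| dG(v) < ∞. Let P⁰ belong to the simplex Δ with P⁰_j > 0 for every j. Then P⁰ maximizes f(P) := ∫ log( Σ_{j=1}^J P_j e^{v_j} ) dG(v) over Δ if and only if the first-order condition ∫ e^{v_j} / ( Σ_{l=1}^J P⁰_l e^{v_l} ) dG(v) = 1 holds for every j = 1,…,J. -/

import Mathlib

open MeasureTheory
open Real Filter Topology

lemma aux_log_bound {x : ℝ} (hx : -(1/2) ≤ x) : |Real.log (1+x)| ≤ 2 * |x| := by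
  have h1 : (0:ℝ) < 1 + x := by linarith
  rcases le_or_gt 0 x with h | h
  · rw [abs_of_nonneg (Real.log_nonneg (by linarith)), abs_of_nonneg h]
    have := Real.log_le_sub_one_of_pos h1
    linarith
  · rw [abs_of_nonpos (Real.log_nonpos (by linarith) (by linarith)), abs_of_neg h]
    have h2 : Real.log (1+x)⁻¹ ≤ (1+x)⁻¹ - 1 := Real.log_le_sub_one_of_pos (by positivity)
    rw [Real.log_inv] at h2
    have h4 : (1+x)⁻¹ - 1 ≤ 2*(-x) := by
      rw [inv_eq_one_div, div_sub' (ne_of_gt h1), div_le_iff₀ h1]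
      nlinarith
    linarith

lemma aux_slope (u : ℝ) :
    Tendsto (fun n : ℕ => Real.log (1 + ((n:ℝ)+2)⁻¹ * u) / ((n:ℝ)+2)⁻¹) atTop (𝓝 u) := by
  have hd : HasDerivAt (fun t : ℝ => Real.log (1 + t * u)) u 0 := by
    have h1 : HasDerivAt (fun t : ℝ => 1 + t * u) u 0 :=
      (hasDerivAt_mul_const u).const_add 1
    have h2 := h1.log (by norm_num)
    simpa using h2
  have hslope := hasDerivAt_iff_tendsto_slope.mp hd
  have h0 : Tendsto (fun n : ℕ => ((n:ℝ)+2)⁻¹) atTop (𝓝 0) := by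
    have : Tendsto (fun n : ℕ => (n:ℝ)+2) atTop atTop :=
      tendsto_atTop_add_const_right _ 2 tendsto_natCast_atTop_atTop
    exact this.inv_tendsto_atTop
  have htn : Tendsto (fun n : ℕ => ((n:ℝ)+2)⁻¹) atTop (𝓝[≠] (0:ℝ)) := by
    refine tendsto_nhdsWithin_iff.mpr ⟨h0, Eventually.of_forall fun n => ?_⟩
    have h2 : (0:ℝ) < (n:ℝ)+2 := by positivity
    exact Set.mem_compl_singleton_iff.mpr (ne_of_gt (inv_pos.mpr h2))
  have := hslope.comp htn
  refine this.congr fun n => ?_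
  simp [slope_def_field, div_eq_mul_inv, mul_comm]


/-- The optimality-constraint moment condition (16) in Proposition 2 of the paper:
an interior point `P⁰` of the simplex maximizes the rational inattention objective
`f(P) = ∫ log(Σ_j P_j e^{v_j}) dG(v)` over the simplex if and only if the
first-order condition `∫ e^{v_j} / Σ_l P⁰_l e^{v_l} dG(v) = 1` holds for every `j`. -/
theorem stmt_9
    (J : ℕ) (hJ : 1 ≤ J)
    (hne : (Finset.univ : Finset (Fin J)).Nonempty)
    (G : Measure (Fin J → ℝ)) [IsProbabilityMeasure G]
    (hint : Integrable (fun v : Fin J → ℝ => Finset.univ.sup' hne fun j => |v j|) G)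
    (Δ : Set (Fin J → ℝ))
    (hΔ : Δ = {P | (∀ j, 0 ≤ P j) ∧ ∑ j, P j = 1})
    (f : (Fin J → ℝ) → ℝ)
    (hf : ∀ P, f P = ∫ v, Real.log (∑ j, P j * Real.exp (v j)) ∂G)
    (P0 : Fin J → ℝ) (hP0Δ : P0 ∈ Δ) (hP0pos : ∀ j, 0 < P0 j) :
    (∀ P ∈ Δ, f P ≤ f P0) ↔
      ∀ j, ∫ v, Real.exp (v j) / ∑ l, P0 l * Real.exp (v l) ∂G = 1 := by
  subst hΔ
  obtain ⟨hP0nn, hP0sum⟩ := hP0Δ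
  set M : (Fin J → ℝ) → ℝ := fun v => Finset.univ.sup' hne fun j => |v j| with hM
  set S : (Fin J → ℝ) → (Fin J → ℝ) → ℝ := fun P v => ∑ j, P j * Real.exp (v j) with hSdef
  have habsM : ∀ (v : Fin J → ℝ) j, |v j| ≤ M v := fun v j =>
    Finset.le_sup' (fun j => |v j|) (Finset.mem_univ j)
  -- lower and upper bounds on S for P in the simplex
  have hSge : ∀ P : Fin J → ℝ, (∀ j, 0 ≤ P j) → ∑ j, P j = 1 →
      ∀ v, Real.exp (-M v) ≤ S P v := by
    intro P hnn hsum v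
    have : Real.exp (-M v) = ∑ j, P j * Real.exp (-M v) := by
      rw [← Finset.sum_mul, hsum, one_mul]
    rw [this]
    refine Finset.sum_le_sum fun j _ => ?_
    exact mul_le_mul_of_nonneg_left
      (Real.exp_le_exp.mpr (by linarith [neg_abs_le (v j), habsM v j])) (hnn j)
  have hSle : ∀ P : Fin J → ℝ, (∀ j, 0 ≤ P j) → ∑ j, P j = 1 →
      ∀ v, S P v ≤ Real.exp (M v) := by
    intro P hnn hsum v
    have h2 : S P v ≤ ∑ j, P j * Real.exp (M v) := by
      refine Finset.sum_le_sum fun j _ => ?_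
      exact mul_le_mul_of_nonneg_left
        (Real.exp_le_exp.mpr (le_trans (le_abs_self _) (habsM v j))) (hnn j)
    rwa [← Finset.sum_mul, hsum, one_mul] at h2
  have hSpos : ∀ P : Fin J → ℝ, (∀ j, 0 ≤ P j) → ∑ j, P j = 1 → ∀ v, 0 < S P v :=
    fun P hnn hsum v => lt_of_lt_of_le (Real.exp_pos _) (hSge P hnn hsum v)
  have hS0pos : ∀ v, 0 < S P0 v := hSpos P0 hP0nn hP0sum
  have hScont : ∀ P : Fin J → ℝ, Continuous (S P) := by
    intro P
    apply continuous_finset_sum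
    intro j _
    exact continuous_const.mul ((continuous_apply j).rexp)
  -- integrability of log (S P)
  have hlogS_int : ∀ P : Fin J → ℝ, (∀ j, 0 ≤ P j) → ∑ j, P j = 1 →
      Integrable (fun v => Real.log (S P v)) G := by
    intro P hnn hsum
    refine hint.mono' (Real.measurable_log.comp (hScont P).measurable).aestronglyMeasurable ?_
    refine Eventually.of_forall fun v => ?_
    rw [Real.norm_eq_abs, abs_le]
    constructor
    · have := Real.log_le_log (Real.exp_pos _) (hSge P hnn hsum v)
      rwa [Real.log_exp] at this
    · have := Real.log_le_log (hSpos P hnn hsum v) (hSle P hnn hsum v)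
      rwa [Real.log_exp] at this
  -- the ratio and its integrability
  have hratio_nn : ∀ (j : Fin J) v, 0 ≤ Real.exp (v j) / S P0 v :=
    fun j v => div_nonneg (Real.exp_pos _).le (hS0pos v).le
  have hratio_le : ∀ (j : Fin J) v, Real.exp (v j) / S P0 v ≤ 1 / P0 j := by
    intro j v
    rw [div_le_div_iff₀ (hS0pos v) (hP0pos j)]
    have := Finset.single_le_sum (f := fun l => P0 l * Real.exp (v l))
      (fun l _ => mul_nonneg (hP0nn l) (Real.exp_pos _).le) (Finset.mem_univ j)
    calc Real.exp (v j) * P0 j = P0 j * Real.exp (v j) := mul_comm _ _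
      _ ≤ S P0 v := this
      _ = 1 * S P0 v := (one_mul _).symm
  have hratio_cont : ∀ j : Fin J, Continuous (fun v => Real.exp (v j) / S P0 v) := by
    intro j
    exact ((continuous_apply j).rexp).div (hScont P0) (fun v => (hS0pos v).ne')
  have hratio_int : ∀ j : Fin J, Integrable (fun v => Real.exp (v j) / S P0 v) G := by
    intro j
    refine (integrable_const (1 / P0 j)).mono' (hratio_cont j).aestronglyMeasurable ?_
    refine Eventually.of_forall fun v => ?_
    rw [Real.norm_eq_abs, abs_of_nonneg (hratio_nn j v)]
    exact hratio_le j v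
  -- Sum identity : ∑ j, P0 j * g j = 1
  have hsum_one : ∑ j, P0 j * (∫ v, Real.exp (v j) / S P0 v ∂G) = 1 := by
    have h1 : ∀ j : Fin J, P0 j * (∫ v, Real.exp (v j) / S P0 v ∂G)
        = ∫ v, P0 j * (Real.exp (v j) / S P0 v) ∂G := fun j => (integral_const_mul _ _).symm
    rw [Finset.sum_congr rfl fun j _ => h1 j]
    rw [← integral_finset_sum _ (fun j _ => (hratio_int j).const_mul _)]
    have hpt1 : ∀ v, ∑ j, P0 j * (Real.exp (v j) / S P0 v) = 1 := by
      intro v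
      simp only [← mul_div_assoc, ← Finset.sum_div]
      exact div_self (hS0pos v).ne'
    rw [integral_congr_ae (Eventually.of_forall hpt1)]
    simp
  constructor
  · -- max ⇒ FOC
    intro hmax
    -- Step B: each integral is ≤ 1
    have hle1 : ∀ k, ∫ v, Real.exp (v k) / S P0 v ∂G ≤ 1 := by
      intro k
      set u : (Fin J → ℝ) → ℝ := fun v => Real.exp (v k) / S P0 v - 1 with hu
      have hu_int : Integrable u G := (hratio_int k).sub (integrable_const 1)
      have hu_lb : ∀ v, -1 ≤ u v := fun v => by
        have := hratio_nn k v; simp only [hu]; linarith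
      have hu_ub : ∀ v, u v ≤ 1 / P0 k := fun v => by
        have := hratio_le k v; simp only [hu]; linarith
      -- the perturbed points
      set t : ℕ → ℝ := fun n => ((n:ℝ)+2)⁻¹ with ht
      have htpos : ∀ n, 0 < t n := fun n => by positivity
      have htle : ∀ n, t n ≤ 1/2 := by
        intro n
        have hc : (0:ℝ) ≤ (n:ℝ) := Nat.cast_nonneg n
        calc t n = ((n:ℝ)+2)⁻¹ := rfl
          _ ≤ ((2:ℝ))⁻¹ := by
              apply inv_anti₀ (by norm_num)
              linarith
          _ = 1/2 := by norm_num
      set Pt : ℕ → (Fin J → ℝ) := fun n j => (1 - t n) * P0 j + t n * (if j = k then 1 else 0)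
        with hPt
      have hPt_nn : ∀ n j, 0 ≤ Pt n j := by
        intro n j
        have h1 := htpos n; have h2 := htle n
        have : 0 ≤ (1 - t n) * P0 j := mul_nonneg (by linarith) (hP0nn j)
        have h3 : (0:ℝ) ≤ t n * (if j = k then 1 else 0) := by positivity
        simp only [hPt]; linarith
      have hPt_sum : ∀ n, ∑ j, Pt n j = 1 := by
        intro n
        simp only [hPt]
        rw [Finset.sum_add_distrib, ← Finset.mul_sum, ← Finset.mul_sum, hP0sum]
        simp
      have hSPt : ∀ n v, S (Pt n) v = (1 - t n) * S P0 v + t n * Real.exp (v k) := by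
        intro n v
        simp only [hSdef, hPt, add_mul, Finset.sum_add_distrib]
        congr 1
        · rw [Finset.mul_sum]; exact Finset.sum_congr rfl fun j _ => by ring
        · have hterm : ∀ x : Fin J, (t n * if x = k then 1 else 0) * Real.exp (v x)
              = if x = k then t n * Real.exp (v k) else 0 := by
            intro x; split <;> simp_all
          rw [Finset.sum_congr rfl fun x _ => hterm x]
          simp
      -- log identity
      have hlog_id : ∀ n v, Real.log (S (Pt n) v) - Real.log (S P0 v)
          = Real.log (1 + t n * u v) := by
        intro n v
        have hx : 1 + t n * u v = S (Pt n) v / S P0 v := by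
          have hus : u v * S P0 v = Real.exp (v k) - S P0 v := by
            simp only [hu]
            rw [sub_mul, div_mul_cancel₀ _ (hS0pos v).ne', one_mul]
          rw [eq_div_iff (hS0pos v).ne', add_mul, one_mul, mul_assoc, hus, hSPt n v]
          ring
        rw [hx, Real.log_div (hSpos _ (hPt_nn n) (hPt_sum n) v).ne' (hS0pos v).ne']
      -- f (Pt n) ≤ f P0 gives integral inequality
      have hint_le : ∀ n, ∫ v, Real.log (1 + t n * u v) ∂G ≤ 0 := by
        intro n
        have h1 := hmax (Pt n) ⟨hPt_nn n, hPt_sum n⟩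
        have h2 : ∫ v, Real.log (1 + t n * u v) ∂G = f (Pt n) - f P0 := by
          rw [hf, hf, ← integral_sub (hlogS_int _ (hPt_nn n) (hPt_sum n))
            (hlogS_int _ hP0nn hP0sum)]
          exact integral_congr_ae (Eventually.of_forall fun v => (hlog_id n v).symm)
        linarith
      -- DCT setup
      set F : ℕ → (Fin J → ℝ) → ℝ := fun n v => Real.log (1 + t n * u v) / t n with hF
      have hF_int_le : ∀ n, ∫ v, F n v ∂G ≤ 0 := by
        intro n
        have : ∫ v, F n v ∂G = (t n)⁻¹ * ∫ v, Real.log (1 + t n * u v) ∂G := by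
          simp only [hF, div_eq_inv_mul]
          exact integral_const_mul _ _
        rw [this]
        exact mul_nonpos_of_nonneg_of_nonpos (by positivity) (hint_le n)
      have hbound : ∀ n v, ‖F n v‖ ≤ 2 * max 1 (1/P0 k) := by
        intro n v
        have h1 : -(1/2) ≤ t n * u v := by
          have hA := mul_le_mul_of_nonneg_left (hu_lb v) (htpos n).le
          rw [mul_neg_one] at hA
          have hB : -(1/2 : ℝ) ≤ -t n := by
            have := htle n
            linarith
          exact le_trans hB hA
        have h2 := aux_log_bound h1
        have h3 : |t n * u v| = t n * |u v| := by
          rw [abs_mul, abs_of_pos (htpos n)]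
        rw [Real.norm_eq_abs, hF]
        rw [abs_div, abs_of_pos (htpos n), div_le_iff₀ (htpos n)]
        have h4 : |u v| ≤ max 1 (1/P0 k) := by
          rw [abs_le]
          constructor
          · have h5 := hu_lb v
            have h6 : (1:ℝ) ≤ max 1 (1/P0 k) := le_max_left _ _
            have h7 : -max 1 (1/P0 k) ≤ (-1 : ℝ) := by linarith
            exact le_trans h7 h5
          · exact le_trans (hu_ub v) (le_max_right _ _)
        calc |Real.log (1 + t n * u v)| ≤ 2 * |t n * u v| := h2
          _ = 2 * (t n * |u v|) := by rw [h3]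
          _ ≤ 2 * (t n * max 1 (1/P0 k)) := by
              have := htpos n
              nlinarith
          _ = 2 * max 1 (1/P0 k) * t n := by ring
      have hF_meas : ∀ n, AEStronglyMeasurable (F n) G := by
        intro n
        apply Measurable.aestronglyMeasurable
        apply Measurable.div_const
        apply Real.measurable_log.comp
        apply Measurable.const_add
        exact ((measurable_const.mul ((hratio_cont k).measurable.sub measurable_const)))
      have hF_lim : ∀ v, Tendsto (fun n => F n v) atTop (𝓝 (u v)) := fun v => aux_slope (u v)
      have hDCT : Tendsto (fun n => ∫ v, F n v ∂G) atTop (𝓝 (∫ v, u v ∂G)) := by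
        refine tendsto_integral_of_dominated_convergence (fun _ => 2 * max 1 (1/P0 k))
          hF_meas (integrable_const _) (fun n => Eventually.of_forall (hbound n))
          (Eventually.of_forall hF_lim)
      have hlim_le : ∫ v, u v ∂G ≤ 0 := le_of_tendsto' hDCT hF_int_le
      have : ∫ v, u v ∂G = (∫ v, Real.exp (v k) / S P0 v ∂G) - 1 := by
        rw [hu, integral_sub (hratio_int k) (integrable_const 1)]
        simp
      linarith [this ▸ hlim_le]
    -- combine with sum identity
    intro j
    by_contra hne1
    have hlt : ∫ v, Real.exp (v j) / S P0 v ∂G < 1 := lt_of_le_of_ne (hle1 j) hne1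
    have : ∑ l, P0 l * (∫ v, Real.exp (v l) / S P0 v ∂G) < ∑ l, P0 l * 1 := by
      refine Finset.sum_lt_sum (fun l _ => ?_) ⟨j, Finset.mem_univ j, ?_⟩
      · exact mul_le_mul_of_nonneg_left (hle1 l) (hP0nn l)
      · exact mul_lt_mul_of_pos_left hlt (hP0pos j)
    simp only [mul_one, hP0sum] at this
    rw [hsum_one] at this
    exact lt_irrefl 1 this
  · -- FOC ⇒ max
    intro hFOC P hP
    obtain ⟨hPnn, hPsum⟩ := hP
    have hpt : ∀ v, Real.log (S P v) - Real.log (S P0 v)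
        ≤ (∑ j, P j * (Real.exp (v j) / S P0 v)) - 1 := by
      intro v
      have h1 : Real.log (S P v) - Real.log (S P0 v) = Real.log (S P v / S P0 v) := by
        rw [Real.log_div (hSpos P hPnn hPsum v).ne' (hS0pos v).ne']
      have h2 : Real.log (S P v / S P0 v) ≤ S P v / S P0 v - 1 :=
        Real.log_le_sub_one_of_pos (div_pos (hSpos P hPnn hPsum v) (hS0pos v))
      have h3 : S P v / S P0 v = ∑ j, P j * (Real.exp (v j) / S P0 v) := by
        rw [hSdef]
        rw [Finset.sum_div]
        exact Finset.sum_congr rfl fun j _ => (mul_div_assoc _ _ _)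
      rw [h1, ← h3]
      exact h2
    have hlhs_int : Integrable (fun v => Real.log (S P v) - Real.log (S P0 v)) G :=
      (hlogS_int P hPnn hPsum).sub (hlogS_int P0 hP0nn hP0sum)
    have hrhs_int : Integrable (fun v => (∑ j, P j * (Real.exp (v j) / S P0 v)) - 1) G :=
      (integrable_finset_sum _ fun j _ => (hratio_int j).const_mul _).sub (integrable_const 1)
    have hmono := integral_mono hlhs_int hrhs_int hpt
    have hL : ∫ v, (Real.log (S P v) - Real.log (S P0 v)) ∂G = f P - f P0 := by
      rw [hf, hf]
      exact integral_sub (hlogS_int P hPnn hPsum) (hlogS_int P0 hP0nn hP0sum)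
    have hR : ∫ v, ((∑ j, P j * (Real.exp (v j) / S P0 v)) - 1) ∂G = 0 := by
      rw [integral_sub (integrable_finset_sum _ fun j _ => (hratio_int j).const_mul _)
        (integrable_const 1)]
      rw [integral_finset_sum _ fun j _ => (hratio_int j).const_mul _]
      have : ∀ j : Fin J, ∫ v, P j * (Real.exp (v j) / S P0 v) ∂G = P j := by
        intro j
        rw [integral_const_mul, hFOC j, mul_one]
      rw [Finset.sum_congr rfl fun j _ => this j, hPsum]
      simp
    rw [hL, hR] at hmono
    linarith
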